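/- Let I be a single-line instance in which all candidate labels are assigned to the same side of the line and which satisfies the transitivity property (Assumption A2), with cost functions w₁ and w₂. Then a choice function ℓ₁,…,ℓ_n (ℓ_i ∈ K_i) is a labeling of I if and only if ℓ_{i-1} and ℓ_i are disjoint for every i = 2,…,n, and in that case its cost satisfies w(L) = w₁(ℓ₁) + Σ_{i=2}^{n} (w₁(ℓ_i) + w₂(ℓ_{i-1}, ℓ_i)). Consequently the minimum cost over all labelings of I equals the minimum of w₁(ℓ₁) + Σ_{i=2}^{n} (w₁(ℓ_i) + w₂(ℓ_{i-1}, ℓ_i)) over all choice functions whose consecutive labels are disjoint. -/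

import Mathlib

/-- A label is a subset of the plane ℝ². -/
abbrev Label : Type := Set (ℝ × ℝ)

/-- `f` is a labeling of the stops `a, a+1, …, b`: it chooses at each stop a candidate
of that stop, and all chosen labels are pairwise disjoint. -/
def IsLabelingOn (K : ℕ → Set Label) (a b : ℕ) (f : ℕ → Label) : Prop :=
  (∀ m, a ≤ m → m ≤ b → f m ∈ K m) ∧
  (∀ m m', a ≤ m → m ≤ b → a ≤ m' → m' ≤ b → m ≠ m' → Disjoint (f m) (f m'))

/-- Assumption A2 (transitivity property) for a single-line instance with stops `1,…,n`. -/
def TransProp (n : ℕ) (K : ℕ → Set Label) (side : Label → Bool) : Prop :=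
  ∀ i j k : ℕ, 1 ≤ i → i < j → j < k → k ≤ n →
    ∀ ℓ ∈ K i, ∀ ℓ' ∈ K j, ∀ ℓ'' ∈ K k,
      side ℓ = side ℓ' → side ℓ' = side ℓ'' →
      Disjoint ℓ ℓ' → Disjoint ℓ' ℓ'' → Disjoint ℓ ℓ''

/-- The cost of a one-sided labeling `f` of stops `1,…,n`:
`w(L) = Σ_i w₁(ℓ_i) + Σ_{i=2}^{n} w₂(ℓ_{i-1}, ℓ_i)`. -/
noncomputable def oneSidedCost (n : ℕ) (w₁ : Label → ℝ) (w₂ : Label → Label → ℝ)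
    (f : ℕ → Label) : ℝ :=
  (∑ i ∈ Finset.Icc 1 n, w₁ (f i)) + ∑ i ∈ Finset.Icc 2 n, w₂ (f (i - 1)) (f i)

/-- In a one-sided instance satisfying the transitivity property:
(1) a choice of one candidate per stop is a labeling iff consecutive chosen labels are
disjoint; (2) the cost of a labeling is
`w₁(ℓ₁) + Σ_{i=2}^{n} (w₁(ℓ_i) + w₂(ℓ_{i-1}, ℓ_i))`; and consequently (3) the minimum
cost over all labelings equals the minimum of that expression over all choice functions
whose consecutive labels are disjoint. -/
theorem stmt2
    (n : ℕ) (hn : 1 ≤ n) (K : ℕ → Set Label) (side : Label → Bool)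
    (hSameSide : ∀ i, 1 ≤ i → i ≤ n → ∀ ℓ ∈ K i,
      ∀ j, 1 ≤ j → j ≤ n → ∀ ℓ' ∈ K j, side ℓ = side ℓ')
    (hA2 : TransProp n K side)
    (w₁ : Label → ℝ) (w₂ : Label → Label → ℝ) :
    (∀ f : ℕ → Label, (∀ i, 1 ≤ i → i ≤ n → f i ∈ K i) →
      (IsLabelingOn K 1 n f ↔ ∀ i, 2 ≤ i → i ≤ n → Disjoint (f (i - 1)) (f i))) ∧
    (∀ f : ℕ → Label, IsLabelingOn K 1 n f →
      oneSidedCost n w₁ w₂ f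
        = w₁ (f 1) + ∑ i ∈ Finset.Icc 2 n, (w₁ (f i) + w₂ (f (i - 1)) (f i))) ∧
    sInf {c : ℝ | ∃ f : ℕ → Label, IsLabelingOn K 1 n f ∧ c = oneSidedCost n w₁ w₂ f}
      = sInf {c : ℝ | ∃ f : ℕ → Label, (∀ i, 1 ≤ i → i ≤ n → f i ∈ K i) ∧
          (∀ i, 2 ≤ i → i ≤ n → Disjoint (f (i - 1)) (f i)) ∧
          c = w₁ (f 1) + ∑ i ∈ Finset.Icc 2 n, (w₁ (f i) + w₂ (f (i - 1)) (f i))} := by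
  -- key lemma: consecutive disjointness implies all-pairs disjointness (for i < j)
  have key : ∀ f : ℕ → Label, (∀ i, 1 ≤ i → i ≤ n → f i ∈ K i) →
      (∀ i, 2 ≤ i → i ≤ n → Disjoint (f (i - 1)) (f i)) →
      ∀ j i, 1 ≤ i → i < j → j ≤ n → Disjoint (f i) (f j) := by
    intro f hK hcons j
    induction j with
    | zero => intro i _ h _; omega
    | succ j ih =>
      intro i hi hij hjn
      rcases eq_or_lt_of_le (Nat.lt_succ_iff.mp hij) with h | h
      · subst h
        have := hcons (i + 1) (by omega) hjn
        simpa using this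
      · have h1 : Disjoint (f i) (f j) := ih i hi h (by omega)
        have h2 : Disjoint (f j) (f (j + 1)) := by
          have := hcons (j + 1) (by omega) hjn
          simpa using this
        have hKi := hK i hi (by omega)
        have hKj := hK j (by omega) (by omega)
        have hKj1 := hK (j + 1) (by omega) hjn
        exact hA2 i j (j + 1) hi h (by omega) hjn _ hKi _ hKj _ hKj1
          (hSameSide i hi (by omega) _ hKi j (by omega) (by omega) _ hKj)
          (hSameSide j (by omega) (by omega) _ hKj (j + 1) (by omega) hjn _ hKj1)
          h1 h2
  have part1 : ∀ f : ℕ → Label, (∀ i, 1 ≤ i → i ≤ n → f i ∈ K i) →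
      (IsLabelingOn K 1 n f ↔ ∀ i, 2 ≤ i → i ≤ n → Disjoint (f (i - 1)) (f i)) := by
    intro f hK
    constructor
    · rintro ⟨-, hdis⟩ i h2 hin
      exact hdis (i - 1) i (by omega) (by omega) (by omega) hin (by omega)
    · intro hcons
      refine ⟨hK, ?_⟩
      intro m m' hm1 hmn hm'1 hm'n hne
      rcases lt_or_gt_of_ne hne with h | h
      · exact key f hK hcons m' m hm1 h hm'n
      · exact (key f hK hcons m m' hm'1 h hmn).symm
  have part2 : ∀ f : ℕ → Label, IsLabelingOn K 1 n f →
      oneSidedCost n w₁ w₂ f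
        = w₁ (f 1) + ∑ i ∈ Finset.Icc 2 n, (w₁ (f i) + w₂ (f (i - 1)) (f i)) := by
    intro f _
    have hins : Finset.Icc 1 n = insert 1 (Finset.Icc 2 n) := by
      ext x; simp [Finset.mem_Icc]; omega
    rw [oneSidedCost, hins, Finset.sum_insert (by simp), Finset.sum_add_distrib]
    ring
  refine ⟨part1, part2, ?_⟩
  congr 1
  ext c
  simp only [Set.mem_setOf_eq]
  constructor
  · rintro ⟨f, hf, rfl⟩
    exact ⟨f, hf.1, (part1 f hf.1).mp hf, part2 f hf⟩
  · rintro ⟨f, hK, hcons, rfl⟩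
    have hlab : IsLabelingOn K 1 n f := (part1 f hK).mpr hcons
    exact ⟨f, hlab, (part2 f hlab).symm⟩
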